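/- Let d and ε be real numbers with 0 < ε < d. Let X₁ and X₂ be independent random variables, each exponentially distributed with rate d, and let Y₁ and Y₂ be independent random variables exponentially distributed with rates d−ε and d+ε respectively. Then for every real t, P(Y₁ + Y₂ > t) ≥ P(X₁ + X₂ > t). -/

import Mathlib

open MeasureTheory ProbabilityTheory Real Set

namespace Stmt9Aux

lemma expMeasure_Iic {r : ℝ} (hr : 0 < r) (s : ℝ) :
    expMeasure r (Iic s) = ENNReal.ofReal (if 0 ≤ s then 1 - rexp (-(r * s)) else 0) := by
  rw [expMeasure, gammaMeasure, withDensity_apply _ measurableSet_Iic]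
  exact lintegral_exponentialPDF_eq_antiDeriv hr s

lemma expMeasure_Ioi {r : ℝ} (hr : 0 < r) (s : ℝ) :
    expMeasure r (Ioi s) = ENNReal.ofReal (rexp (-(r * max s 0))) := by
  haveI := isProbabilityMeasure_expMeasure hr
  have h : Ioi s = (Iic s)ᶜ := by simp
  rw [h, measure_compl measurableSet_Iic (measure_ne_top _ _), measure_univ, expMeasure_Iic hr]
  rcases le_or_gt 0 s with hs | hs
  · have he1 : rexp (-(r * s)) ≤ 1 := exp_le_one_iff.mpr (by nlinarith)
    rw [if_pos hs, max_eq_left hs, ← ENNReal.ofReal_one,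
      ← ENNReal.ofReal_sub _ (by linarith : (0:ℝ) ≤ 1 - rexp (-(r * s))), sub_sub_cancel]
  · rw [if_neg (not_le.mpr hs), max_eq_right hs.le, ENNReal.ofReal_zero, tsub_zero, mul_zero,
      neg_zero, exp_zero, ENNReal.ofReal_one]

lemma measure_add_gt {Ω : Type*} [MeasurableSpace Ω] (P : Measure Ω) [IsProbabilityMeasure P]
    {X Y : Ω → ℝ} (hX : Measurable X) (hY : Measurable Y) (hind : IndepFun X Y P)
    {a b : ℝ} (hb : 0 < b)
    (hXl : Measure.map X P = expMeasure a) (hYl : Measure.map Y P = expMeasure b) (t : ℝ) :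
    P {ω | t < X ω + Y ω}
      = ∫⁻ x, ENNReal.ofReal (rexp (-(b * max (t - x) 0))) ∂(expMeasure a) := by
  haveI := isProbabilityMeasure_expMeasure hb
  have hmap : Measure.map (fun ω => (X ω, Y ω)) P = (expMeasure a).prod (expMeasure b) := by
    rw [← hXl, ← hYl]
    exact (indepFun_iff_map_prod_eq_prod_map_map hX.aemeasurable hY.aemeasurable).mp hind
  have hms : MeasurableSet {p : ℝ × ℝ | t < p.1 + p.2} :=
    measurableSet_lt measurable_const (measurable_fst.add measurable_snd)
  have hset : {ω | t < X ω + Y ω} = (fun ω => (X ω, Y ω)) ⁻¹' {p : ℝ × ℝ | t < p.1 + p.2} := rfl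
  rw [hset, ← Measure.map_apply (hX.prodMk hY) hms, hmap, Measure.prod_apply hms]
  refine lintegral_congr fun x => ?_
  have hsec : Prod.mk x ⁻¹' {p : ℝ × ℝ | t < p.1 + p.2} = Ioi (t - x) := by
    ext y
    simp only [mem_preimage, mem_setOf_eq, mem_Ioi]
    constructor <;> intro h <;> linarith
  rw [hsec, expMeasure_Ioi hb]

lemma surv_lintegral {a b t : ℝ} (ha : 0 < a) (hb : 0 < b) (ht : 0 ≤ t) :
    ∫⁻ x, ENNReal.ofReal (rexp (-(b * max (t - x) 0))) ∂(expMeasure a)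
      = ENNReal.ofReal
          (rexp (-(a * t)) + rexp (-(b * t)) * ∫ x in (0:ℝ)..t, a * rexp ((b - a) * x)) := by
  have hcont : Continuous fun x : ℝ => rexp (-(b * max (t - x) 0)) := by continuity
  set F : ℝ → ℝ := fun x => a * rexp (-(a * x)) * rexp (-(b * max (t - x) 0)) with hF
  have hFcont : Continuous F := by
    rw [hF]; continuity
  set g : ℝ → ℝ := fun x => (if 0 ≤ x then a * rexp (-(a * x)) else 0)
      * rexp (-(b * max (t - x) 0)) with hg
  have hind : g = Set.indicator (Ici 0) F := by
    funext x
    simp only [hg, hF, Set.indicator_apply, mem_Ici, ite_mul, zero_mul]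
  have hFbase : IntegrableOn (fun x => a * rexp (-(a * x))) (Ici 0) := by
    rw [integrableOn_Ici_iff_integrableOn_Ioi]
    exact (by simpa only [neg_mul] using (exp_neg_integrableOn_Ioi 0 ha).const_mul a :
      Integrable (fun x => a * rexp (-(a * x))) (volume.restrict (Ioi 0)))
  have hFInt : IntegrableOn F (Ici 0) := by
    refine Integrable.mono hFbase hFcont.aestronglyMeasurable (ae_of_all _ fun x => ?_)
    have h1 : 0 ≤ a * rexp (-(a * x)) := by positivity
    rw [Real.norm_eq_abs, Real.norm_eq_abs, abs_of_nonneg (by positivity), abs_of_nonneg h1]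
    have : rexp (-(b * max (t - x) 0)) ≤ 1 :=
      exp_le_one_iff.mpr (by simp only [Left.neg_nonpos_iff]; positivity)
    exact mul_le_of_le_one_right h1 this
  have hgint : Integrable g := by
    rw [hind, integrable_indicator_iff measurableSet_Ici]; exact hFInt
  have hgnn : 0 ≤ᵐ[(volume : Measure ℝ)] g := ae_of_all _ fun x => by
    simp only [hg]; split_ifs <;> positivity
  have step1 : ∫⁻ x, ENNReal.ofReal (rexp (-(b * max (t - x) 0))) ∂(expMeasure a)
      = ∫⁻ x, ENNReal.ofReal (g x) := by
    have hm : Measurable (gammaPDF 1 a) := (measurable_gammaPDFReal 1 a).ennreal_ofReal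
    rw [expMeasure, gammaMeasure,
      lintegral_withDensity_eq_lintegral_mul _ hm hcont.measurable.ennreal_ofReal]
    refine lintegral_congr fun x => ?_
    have hpdf : gammaPDF 1 a x = ENNReal.ofReal (if 0 ≤ x then a * rexp (-(a * x)) else 0) :=
      exponentialPDF_eq a x
    rw [Pi.mul_apply, hpdf, ← ENNReal.ofReal_mul (by split_ifs <;> positivity)]
  rw [step1, ← ofReal_integral_eq_lintegral_ofReal hgint hgnn]
  congr 1
  have hIoc : ∫ x in Ioc 0 t, F x
      = rexp (-(b * t)) * ∫ x in (0:ℝ)..t, a * rexp ((b - a) * x) := by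
    rw [← intervalIntegral.integral_of_le ht, ← intervalIntegral.integral_const_mul]
    refine intervalIntegral.integral_congr fun x hx => ?_
    rw [uIcc_of_le ht] at hx
    have hxt : x ≤ t := hx.2
    simp only [hF]
    rw [max_eq_left (by linarith : (0:ℝ) ≤ t - x)]
    have harg : -(a * x) + -(b * (t - x)) = -(b * t) + (b - a) * x := by ring
    rw [mul_assoc, ← Real.exp_add, harg, Real.exp_add]
    ring
  have hIoi : ∫ x in Ioi t, F x = rexp (-(a * t)) := by
    have heq : EqOn F (fun x => a * rexp (-(a * x))) (Ioi t) := fun x hx => by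
      have : t - x ≤ 0 := by have := mem_Ioi.mp hx; linarith
      simp only [hF, max_eq_right this, mul_zero, neg_zero, exp_zero, mul_one]
    rw [setIntegral_congr_fun measurableSet_Ioi heq, integral_const_mul]
    have hsub := integral_comp_mul_left_Ioi (fun y => rexp (-y)) t ha
    simp only [smul_eq_mul] at hsub
    rw [hsub, integral_exp_neg_Ioi]
    field_simp
  calc ∫ x, g x = ∫ x in Ici 0, F x := by rw [hind, integral_indicator measurableSet_Ici]
    _ = ∫ x in Ioi 0, F x := integral_Ici_eq_integral_Ioi
    _ = (∫ x in Ioc 0 t, F x) + ∫ x in Ioi t, F x := by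
        rw [← Ioc_union_Ioi_eq_Ioi ht,
          setIntegral_union Ioc_disjoint_Ioi_same measurableSet_Ioi
            (hFInt.mono_set fun x hx => le_of_lt hx.1)
            (hFInt.mono_set fun x hx => le_trans ht (le_of_lt hx))]
    _ = rexp (-(a * t)) + rexp (-(b * t)) * ∫ x in (0:ℝ)..t, a * rexp ((b - a) * x) := by
        rw [hIoc, hIoi]; ring

lemma I_eq_same (a t : ℝ) : ∫ x in (0:ℝ)..t, a * rexp ((a - a) * x) = a * t := by
  simp [mul_comm]

lemma I_eq_ne {a b : ℝ} (hne : b - a ≠ 0) (t : ℝ) :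
    ∫ x in (0:ℝ)..t, a * rexp ((b - a) * x) = a / (b - a) * (rexp ((b - a) * t) - 1) := by
  rw [intervalIntegral.integral_const_mul]
  have hderiv : ∀ x ∈ uIcc (0:ℝ) t,
      HasDerivAt (fun y => (b - a)⁻¹ * rexp ((b - a) * y)) (rexp ((b - a) * x)) x := by
    intro x _
    have h1 : HasDerivAt (fun y : ℝ => (b - a) * y) (b - a) x := by
      simpa using (hasDerivAt_id x).const_mul (b - a)
    have h2 := (h1.exp).const_mul (b - a)⁻¹
    refine h2.congr_deriv ?_
    field_simp
  rw [intervalIntegral.integral_eq_sub_of_hasDerivAt hderiv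
    (Continuous.intervalIntegrable (by continuity) _ _)]
  rw [mul_zero, exp_zero]
  field_simp

end Stmt9Aux

open Stmt9Aux

theorem stmt_9 (d ε : ℝ) (hε : 0 < ε) (hεd : ε < d)
    {Ω : Type*} [MeasurableSpace Ω] (P : Measure Ω) [IsProbabilityMeasure P]
    (X₁ X₂ Y₁ Y₂ : Ω → ℝ)
    (hX₁ : Measurable X₁) (hX₂ : Measurable X₂)
    (hY₁ : Measurable Y₁) (hY₂ : Measurable Y₂)
    (hXindep : IndepFun X₁ X₂ P) (hYindep : IndepFun Y₁ Y₂ P)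
    (hX₁law : Measure.map X₁ P = expMeasure d)
    (hX₂law : Measure.map X₂ P = expMeasure d)
    (hY₁law : Measure.map Y₁ P = expMeasure (d - ε))
    (hY₂law : Measure.map Y₂ P = expMeasure (d + ε)) :
    ∀ t : ℝ, P {ω | t < X₁ ω + X₂ ω} ≤ P {ω | t < Y₁ ω + Y₂ ω} := by
  intro t
  have hd : 0 < d := hε.trans hεd
  have ha : 0 < d - ε := sub_pos.mpr hεd
  have hb : 0 < d + ε := by linarith
  rcases lt_or_ge t 0 with htneg | ht
  · -- t < 0 : the right-hand side has probability one
    have hms : MeasurableSet {ω | t < Y₁ ω + Y₂ ω} :=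
      measurableSet_lt measurable_const (hY₁.add hY₂)
    have hY0 : ∀ (Y : Ω → ℝ) (r : ℝ), Measurable Y → Measure.map Y P = expMeasure r →
        P (Y ⁻¹' Iio 0) = 0 := by
      intro Y r hY hl
      rw [← Measure.map_apply hY measurableSet_Iio, hl, expMeasure, gammaMeasure,
        withDensity_apply _ measurableSet_Iio]
      exact lintegral_exponentialPDF_of_nonpos le_rfl
    have h1 : P {ω | t < Y₁ ω + Y₂ ω} = 1 := by
      rw [← prob_compl_eq_zero_iff hms]
      refine measure_mono_null ?_
        (measure_union_null (hY0 Y₁ _ hY₁ hY₁law) (hY0 Y₂ _ hY₂ hY₂law))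
      intro ω hω
      simp only [mem_compl_iff, mem_setOf_eq, not_lt] at hω
      by_contra hcon
      simp only [mem_union, mem_preimage, mem_Iio, not_or, not_lt] at hcon
      have := hcon.1; have := hcon.2
      linarith
    rw [h1]; exact prob_le_one
  · -- 0 ≤ t : explicit computation
    have hLHS : P {ω | t < X₁ ω + X₂ ω}
        = ENNReal.ofReal (rexp (-(d * t)) + rexp (-(d * t)) * (d * t)) := by
      rw [measure_add_gt P hX₁ hX₂ hXindep hd hX₁law hX₂law t,
        surv_lintegral hd hd ht, I_eq_same]
    have hne : (d + ε) - (d - ε) ≠ 0 := by intro h; nlinarith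
    have hRHS : P {ω | t < Y₁ ω + Y₂ ω}
        = ENNReal.ofReal (rexp (-((d - ε) * t)) + rexp (-((d + ε) * t)) *
            ((d - ε) / ((d + ε) - (d - ε)) * (rexp (((d + ε) - (d - ε)) * t) - 1))) := by
      rw [measure_add_gt P hY₁ hY₂ hYindep hb hY₁law hY₂law t,
        surv_lintegral ha hb ht, I_eq_ne hne]
    rw [hLHS, hRHS]
    apply ENNReal.ofReal_le_ofReal
    have hden : (d + ε) - (d - ε) = 2 * ε := by ring
    rw [hden]
    set C := Real.cosh (ε * t) with hCdef
    set S := Real.sinh (ε * t) with hSdef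
    set E := rexp (-(d * t)) with hEdef
    have hE : 0 < E := exp_pos _
    have hC : 1 ≤ C := one_le_cosh (ε * t)
    have hS : ε * t ≤ S := Real.self_le_sinh_iff.mpr (mul_nonneg hε.le ht)
    have hCS : C ^ 2 - S ^ 2 = 1 := Real.cosh_sq_sub_sinh_sq (ε * t)
    have e1 : rexp (-((d - ε) * t)) = E * (C + S) := by
      rw [hCdef, hSdef, Real.cosh_add_sinh, hEdef, ← Real.exp_add]
      congr 1; ring
    have e2 : rexp (-((d + ε) * t)) = E * (C - S) := by
      rw [hCdef, hSdef, Real.cosh_sub_sinh, hEdef, ← Real.exp_add]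
      congr 1; ring
    have e3 : rexp (2 * ε * t) = (C + S) * (C + S) := by
      rw [hCdef, hSdef, Real.cosh_add_sinh, ← Real.exp_add]
      congr 1; ring
    rw [e1, e2, e3]
    set q := (d - ε) / (2 * ε) with hqdef
    have hq : q * (2 * ε) = d - ε := div_mul_cancel₀ _ (by positivity)
    have hq0 : 0 ≤ q := by positivity
    have hred : (C - S) * (q * ((C + S) * (C + S) - 1)) = q * (2 * S) := by
      linear_combination q * (C + S) * hCS
    have hgoal : E * (C - S) * (q * ((C + S) * (C + S) - 1)) = E * (q * (2 * S)) := by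
      rw [mul_assoc, hred]
    rw [hgoal]
    have h1 : 0 ≤ (C - 1) * E * ε :=
      mul_nonneg (mul_nonneg (sub_nonneg.2 hC) hE.le) hε.le
    have h2 : 0 ≤ (S - ε * t) * E * d :=
      mul_nonneg (mul_nonneg (sub_nonneg.2 hS) hE.le) hd.le
    have hq2 : q * (2 * ε) * (S * E) = (d - ε) * (S * E) := by rw [hq]
    nlinarith [h1, h2, hq2, mul_pos hε hE]
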